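/- If t is a positive integer with t ≡ 9 (mod 18), then a₃(t) = (2t² − 32t + 126)/9. -/

import Mathlib

/-- A 3×3 magic square with magic sum `t`: pairwise distinct positive integer entries,
all row sums, column sums, and both main diagonal sums equal to `t`. -/
def IsMagicSquare3 (t : ℕ) (M : Matrix (Fin 3) (Fin 3) ℕ) : Prop :=
  (∀ i j, 0 < M i j) ∧
  (Function.Injective fun p : Fin 3 × Fin 3 => M p.1 p.2) ∧
  (∀ i, ∑ j, M i j = t) ∧
  (∀ j, ∑ i, M i j = t) ∧
  M 0 0 + M 1 1 + M 2 2 = t ∧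
  M 0 2 + M 1 1 + M 2 0 = t

/-- The number of 3×3 magic squares with magic sum `t`. -/
noncomputable def a3 (t : ℕ) : ℕ := Set.ncard {M : Matrix (Fin 3) (Fin 3) ℕ | IsMagicSquare3 t M}

open Finset

def gmat (c : ℕ) (a b : ℤ) : Matrix (Fin 3) (Fin 3) ℕ :=
  !![((c:ℤ)+a).toNat, ((c:ℤ)-a-b).toNat, ((c:ℤ)+b).toNat;
     ((c:ℤ)-a+b).toNat, c, ((c:ℤ)+a-b).toNat;
     ((c:ℤ)-b).toNat, ((c:ℤ)+a+b).toNat, ((c:ℤ)-a).toNat]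

def Pc (c : ℕ) (p : ℤ × ℤ) : Prop :=
  p.1.natAbs + p.2.natAbs ≤ c - 1 ∧ p.1 ≠ 0 ∧ p.2 ≠ 0 ∧ p.1 ≠ p.2 ∧ p.1 + p.2 ≠ 0 ∧
    p.1 ≠ 2*p.2 ∧ p.1 + 2*p.2 ≠ 0 ∧ p.2 ≠ 2*p.1 ∧ p.2 + 2*p.1 ≠ 0

instance (c : ℕ) : DecidablePred (Pc c) := fun p => by unfold Pc; infer_instance


set_option maxHeartbeats 1000000 in
lemma magic_back (c : ℕ) (hc : 0 < c) (a b : ℤ) (hP : Pc c (a, b)) :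
    IsMagicSquare3 (3*c) (gmat c a b) := by
  obtain ⟨hbd, h1, h2, h3, h4, h5, h6, h7, h8⟩ := hP
  simp only at hbd h1 h2 h3 h4 h5 h6 h7 h8
  refine ⟨?_, ?_, ?_, ?_, ?_, ?_⟩
  · intro i j
    fin_cases i <;> fin_cases j <;>
      simp [gmat, Fin.mk_zero, Fin.mk_one] <;> omega
  · rintro ⟨p1, p2⟩ ⟨q1, q2⟩ hpq
    simp only at hpq
    fin_cases p1 <;> fin_cases p2 <;> fin_cases q1 <;> fin_cases q2 <;>
      first
      | rfl
      | (simp only [gmat, Fin.reduceFinMk, Fin.mk_one, Fin.mk_zero, Fin.isValue,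
          Matrix.of_apply, Matrix.cons_val', Matrix.cons_val_zero, Matrix.cons_val_one,
          Matrix.head_cons, Matrix.empty_val', Matrix.cons_val_fin_one, Matrix.cons_val_two,
          Nat.succ_eq_add_one, Nat.reduceAdd, Matrix.tail_cons, Matrix.head_fin_const] at hpq
         exfalso; omega)
  · intro i; fin_cases i <;> simp [gmat, Fin.sum_univ_three] <;> omega
  · intro j; fin_cases j <;> simp [gmat, Fin.sum_univ_three] <;> omega
  · simp [gmat]; omega
  · simp [gmat]; omega

set_option maxHeartbeats 1000000 in
lemma magic_forward (c : ℕ) (hc : 0 < c) (M : Matrix (Fin 3) (Fin 3) ℕ)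
    (hM : IsMagicSquare3 (3*c) M) :
    ∃ p : ℤ × ℤ, Pc c p ∧ M = gmat c p.1 p.2 := by
  obtain ⟨hpos, hinj, hrow, hcol, hd, ha⟩ := hM
  have hr0 := hrow 0; have hr1 := hrow 1; have hr2 := hrow 2
  have hc0 := hcol 0; have hc1 := hcol 1; have hc2 := hcol 2
  rw [Fin.sum_univ_three] at hr0 hr1 hr2 hc0 hc1 hc2
  set a : ℤ := (M 0 0 : ℤ) - c with hadef
  set b : ℤ := (M 0 2 : ℤ) - c with hbdef
  have hne : ∀ p q : Fin 3 × Fin 3, p ≠ q → M p.1 p.2 ≠ M q.1 q.2 :=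
    fun p q hpq h => hpq (hinj h)
  -- center
  have hcen : M 1 1 = c := by omega
  have e00 : (M 0 0 : ℤ) = c + a := by omega
  have e01 : (M 0 1 : ℤ) = c - a - b := by omega
  have e02 : (M 0 2 : ℤ) = c + b := by omega
  have e10 : (M 1 0 : ℤ) = c - a + b := by omega
  have e12 : (M 1 2 : ℤ) = c + a - b := by omega
  have e20 : (M 2 0 : ℤ) = c - b := by omega
  have e21 : (M 2 1 : ℤ) = c + a + b := by omega
  have e22 : (M 2 2 : ℤ) = c - a := by omega
  have p00 := hpos 0 0; have p01 := hpos 0 1; have p02 := hpos 0 2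
  have p10 := hpos 1 0; have p12 := hpos 1 2
  have p20 := hpos 2 0; have p21 := hpos 2 1; have p22 := hpos 2 2
  refine ⟨(a, b), ⟨?_, ?_, ?_, ?_, ?_, ?_, ?_, ?_, ?_⟩, ?_⟩
  · simp only; omega
  · have := hne (0,0) (2,2) (by decide); simp only at this; omega
  · have := hne (0,2) (2,0) (by decide); simp only at this; omega
  · have := hne (0,0) (0,2) (by decide); simp only at this; omega
  · have := hne (0,0) (2,0) (by decide); simp only at this; omega
  · have := hne (1,2) (0,2) (by decide); simp only at this; omega
  · have := hne (2,1) (2,0) (by decide); simp only at this; omega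
  · have := hne (1,0) (0,0) (by decide); simp only at this; omega
  · have := hne (2,1) (2,2) (by decide); simp only at this; omega
  · funext i j
    fin_cases i <;> fin_cases j <;>
      simp [gmat, Fin.mk_zero, Fin.mk_one] <;> omega

lemma sum_odds (N : ℕ) : ∑ i ∈ range N, (2*i+1) = N^2 := by
  induction N with
  | zero => simp
  | succ n ih => rw [Finset.sum_range_succ, ih]; ring

lemma sum_gauss (N : ℕ) : ∑ j ∈ Icc 1 N, (2*(N-j)+1) = N^2 := by
  induction N with
  | zero => simp
  | succ n ih =>
    rw [show Icc 1 (n+1) = insert (n+1) (Icc 1 n) by ext x; simp [mem_Icc]; omega]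
    rw [Finset.sum_insert (by simp [mem_Icc])]
    have : ∑ j ∈ Icc 1 n, (2*(n+1-j)+1) = ∑ j ∈ Icc 1 n, ((2*(n-j)+1) + 2) := by
      apply Finset.sum_congr rfl; intro j hj; simp [mem_Icc] at hj; omega
    rw [this, Finset.sum_add_distrib, ih, Finset.sum_const, Nat.card_Icc]
    simp; ring

lemma sum_symm (N : ℕ) (f : ℕ → ℕ) :
    ∑ a ∈ Icc (-(N:ℤ)) (N:ℤ), f a.natAbs = f 0 + 2 * ∑ j ∈ Icc 1 N, f j := by
  have hsplit : Icc (-(N:ℤ)) (N:ℤ) = Icc (-(N:ℤ)) (-1) ∪ Icc 0 (N:ℤ) := by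
    ext x; simp [mem_Icc, mem_union]; omega
  have hdisj : Disjoint (Icc (-(N:ℤ)) (-1)) (Icc 0 (N:ℤ)) := by
    simp [Finset.disjoint_left, mem_Icc]; omega
  rw [hsplit, Finset.sum_union hdisj]
  have hneg : Icc (-(N:ℤ)) (-1) = (Icc (1:ℤ) N).image (fun x => -x) := by
    ext x; simp [mem_Icc, mem_image]
    constructor
    · intro hx; exact ⟨-x, by omega, by omega⟩
    · rintro ⟨y, hy, rfl⟩; omega
  have hcast : Icc (1:ℤ) (N:ℤ) = (Icc 1 N).image (fun j : ℕ => (j:ℤ)) := by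
    ext x; simp [mem_Icc, mem_image]
    constructor
    · intro hx; exact ⟨x.toNat, by omega, by omega⟩
    · rintro ⟨y, hy, rfl⟩; omega
  have h0 : Icc (0:ℤ) (N:ℤ) = insert 0 (Icc (1:ℤ) N) := by
    ext x; simp [mem_Icc, mem_insert]; omega
  have hsum1 : ∑ a ∈ Icc (1:ℤ) (N:ℤ), f a.natAbs = ∑ j ∈ Icc 1 N, f j := by
    rw [hcast, Finset.sum_image (by intro x _ y _ h; simp only at h; exact_mod_cast h)]
    apply Finset.sum_congr rfl; intro j _; simp
  rw [hneg, Finset.sum_image (by intro x _ y _ h; simp only at h; omega)]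
  rw [h0, Finset.sum_insert (by simp [mem_Icc])]
  have : ∑ a ∈ Icc (1:ℤ) (N:ℤ), f (-a).natAbs = ∑ a ∈ Icc (1:ℤ) (N:ℤ), f a.natAbs := by
    apply Finset.sum_congr rfl; intro x _; congr 1; omega
  rw [this, hsum1]
  simp; ring

noncomputable def Dm (N : ℕ) : Finset (ℤ × ℤ) :=
  (Icc (-(N:ℤ)) (N:ℤ) ×ˢ Icc (-(N:ℤ)) (N:ℤ)).filter (fun p => p.1.natAbs + p.2.natAbs ≤ N)

lemma Dcard (N : ℕ) : (Dm N).card = 2*N^2 + 2*N + 1 := by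
  rw [Finset.card_eq_sum_card_fiberwise (f := Prod.fst) (t := Icc (-(N:ℤ)) (N:ℤ))
    (fun p hp => by
      simp only [Dm, mem_coe, mem_filter, mem_product, mem_Icc] at hp
      simp [mem_Icc]; omega)]
  have hfib : ∀ a ∈ Icc (-(N:ℤ)) (N:ℤ),
      ((Dm N).filter (fun p => p.1 = a)).card = 2*(N - a.natAbs)+1 := by
    intro a ha
    simp only [mem_Icc] at ha
    have himg : (Dm N).filter (fun p => p.1 = a)
        = (Icc (-((N:ℤ) - a.natAbs)) ((N:ℤ) - a.natAbs)).image (fun y => (a, y)) := by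
      ext ⟨x, y⟩
      simp only [Dm, mem_filter, mem_product, mem_Icc, mem_image, Prod.mk.injEq]
      constructor
      · rintro ⟨⟨⟨⟨hx1, hx2⟩, hy1, hy2⟩, hbd⟩, rfl⟩
        exact ⟨y, ⟨by omega, by omega⟩, rfl, rfl⟩
      · rintro ⟨w, hw, rfl, rfl⟩
        refine ⟨⟨⟨⟨?_, ?_⟩, ?_, ?_⟩, ?_⟩, rfl⟩ <;> omega
    rw [himg, Finset.card_image_of_injective _ (fun x y h => by simpa using h),
      Int.card_Icc]
    omega
  rw [Finset.sum_congr rfl hfib, sum_symm N (fun j => 2*(N-j)+1), sum_gauss]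
  simp; ring

lemma line_card (N : ℕ) (u v : ℤ) (k : ℕ) (huv : u ≠ 0 ∨ v ≠ 0)
    (hiff : ∀ x : ℤ, (u*x).natAbs + (v*x).natAbs ≤ N ↔ x.natAbs ≤ k)
    (hsol : ∀ x y : ℤ, v*x = u*y → ∃ w : ℤ, x = u*w ∧ y = v*w) :
    ((Dm N).filter (fun p => v*p.1 = u*p.2)).card = 2*k+1 := by
  have himg : (Dm N).filter (fun p => v*p.1 = u*p.2)
      = (Icc (-(k:ℤ)) (k:ℤ)).image (fun w => (u*w, v*w)) := by
    ext ⟨x, y⟩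
    simp only [Dm, mem_filter, mem_product, mem_Icc, mem_image, Prod.mk.injEq]
    constructor
    · rintro ⟨⟨⟨⟨hx1, hx2⟩, hy1, hy2⟩, hbd⟩, hline⟩
      obtain ⟨w, rfl, rfl⟩ := hsol x y hline
      have := (hiff w).1 hbd
      exact ⟨w, ⟨by omega, by omega⟩, rfl, rfl⟩
    · rintro ⟨w, ⟨hw1, hw2⟩, rfl, rfl⟩
      have := (hiff w).2 (by omega)
      refine ⟨⟨⟨⟨?_, ?_⟩, ?_, ?_⟩, ?_⟩, by ring⟩ <;> omega
  rw [himg, Finset.card_image_of_injective, Int.card_Icc]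
  · omega
  · intro x y hxy
    simp only [Prod.mk.injEq] at hxy
    rcases huv with hu | hv
    · exact mul_left_cancel₀ hu hxy.1
    · exact mul_left_cancel₀ hv hxy.2

set_option maxHeartbeats 4000000 in
lemma Tcard (m : ℕ) :
    (((Icc (-(((6*m+2:ℕ)):ℤ)) ((6*m+2:ℕ):ℤ)) ×ˢ (Icc (-((6*m+2:ℕ):ℤ)) ((6*m+2:ℕ):ℤ))).filter
      (Pc (6*m+3))).card = 72*m^2+8*m := by
  set N : ℕ := 6*m+2 with hN
  set L1 := (Dm N).filter (fun p => 1*p.1 = 0*p.2) with hL1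
  set L2 := (Dm N).filter (fun p => 0*p.1 = 1*p.2) with hL2
  set L3 := (Dm N).filter (fun p => 1*p.1 = 1*p.2) with hL3
  set L4 := (Dm N).filter (fun p => (-1)*p.1 = 1*p.2) with hL4
  set L5 := (Dm N).filter (fun p => 1*p.1 = 2*p.2) with hL5
  set L6 := (Dm N).filter (fun p => (-1)*p.1 = 2*p.2) with hL6
  set L7 := (Dm N).filter (fun p => 2*p.1 = 1*p.2) with hL7
  set L8 := (Dm N).filter (fun p => (-2)*p.1 = 1*p.2) with hL8
  have hc1 : L1.card = 2*N+1 := line_card N 0 1 N (by simp)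
    (fun x => by constructor <;> intro <;> omega) (fun x y h => ⟨y, by omega, by omega⟩)
  have hc2 : L2.card = 2*N+1 := line_card N 1 0 N (by simp)
    (fun x => by constructor <;> intro <;> omega) (fun x y h => ⟨x, by omega, by omega⟩)
  have hc3 : L3.card = 2*(3*m+1)+1 := line_card N 1 1 (3*m+1) (by simp)
    (fun x => by constructor <;> intro <;> omega) (fun x y h => ⟨x, by omega, by omega⟩)
  have hc4 : L4.card = 2*(3*m+1)+1 := line_card N 1 (-1) (3*m+1) (by simp)
    (fun x => by constructor <;> intro <;> omega) (fun x y h => ⟨x, by omega, by omega⟩)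
  have hc5 : L5.card = 2*(2*m)+1 := line_card N 2 1 (2*m) (by simp)
    (fun x => by constructor <;> intro <;> omega) (fun x y h => ⟨y, by omega, by omega⟩)
  have hc6 : L6.card = 2*(2*m)+1 := line_card N 2 (-1) (2*m) (by simp)
    (fun x => by constructor <;> intro <;> omega) (fun x y h => ⟨-y, by omega, by omega⟩)
  have hc7 : L7.card = 2*(2*m)+1 := line_card N 1 2 (2*m) (by simp)
    (fun x => by constructor <;> intro <;> omega) (fun x y h => ⟨x, by omega, by omega⟩)
  have hc8 : L8.card = 2*(2*m)+1 := line_card N 1 (-2) (2*m) (by simp)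
    (fun x => by constructor <;> intro <;> omega) (fun x y h => ⟨x, by omega, by omega⟩)
  set U := ((((((L1 ∪ L2) ∪ L3) ∪ L4) ∪ L5) ∪ L6) ∪ L7) ∪ L8 with hU
  have simpmem : ∀ (X : Finset (ℤ × ℤ)), X = X := fun _ => rfl
  have i2 : L1 ∩ L2 = {((0:ℤ),(0:ℤ))} := by
    ext ⟨x, y⟩
    simp only [hL1, hL2, Dm, mem_inter, mem_filter, mem_product, mem_Icc, mem_singleton,
      Prod.mk.injEq]
    omega
  have i3 : (L1 ∪ L2) ∩ L3 = {((0:ℤ),(0:ℤ))} := by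
    ext ⟨x, y⟩
    simp only [hL1, hL2, hL3, Dm, mem_inter, mem_union, mem_filter, mem_product, mem_Icc,
      mem_singleton, Prod.mk.injEq]
    omega
  have i4 : ((L1 ∪ L2) ∪ L3) ∩ L4 = {((0:ℤ),(0:ℤ))} := by
    ext ⟨x, y⟩
    simp only [hL1, hL2, hL3, hL4, Dm, mem_inter, mem_union, mem_filter, mem_product, mem_Icc,
      mem_singleton, Prod.mk.injEq]
    omega
  have i5 : (((L1 ∪ L2) ∪ L3) ∪ L4) ∩ L5 = {((0:ℤ),(0:ℤ))} := by
    ext ⟨x, y⟩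
    simp only [hL1, hL2, hL3, hL4, hL5, Dm, mem_inter, mem_union, mem_filter, mem_product,
      mem_Icc, mem_singleton, Prod.mk.injEq]
    omega
  have i6 : ((((L1 ∪ L2) ∪ L3) ∪ L4) ∪ L5) ∩ L6 = {((0:ℤ),(0:ℤ))} := by
    ext ⟨x, y⟩
    simp only [hL1, hL2, hL3, hL4, hL5, hL6, Dm, mem_inter, mem_union, mem_filter, mem_product,
      mem_Icc, mem_singleton, Prod.mk.injEq]
    omega
  have i7 : (((((L1 ∪ L2) ∪ L3) ∪ L4) ∪ L5) ∪ L6) ∩ L7 = {((0:ℤ),(0:ℤ))} := by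
    ext ⟨x, y⟩
    simp only [hL1, hL2, hL3, hL4, hL5, hL6, hL7, Dm, mem_inter, mem_union, mem_filter,
      mem_product, mem_Icc, mem_singleton, Prod.mk.injEq]
    omega
  have i8 : ((((((L1 ∪ L2) ∪ L3) ∪ L4) ∪ L5) ∪ L6) ∪ L7) ∩ L8 = {((0:ℤ),(0:ℤ))} := by
    ext ⟨x, y⟩
    simp only [hL1, hL2, hL3, hL4, hL5, hL6, hL7, hL8, Dm, mem_inter, mem_union, mem_filter,
      mem_product, mem_Icc, mem_singleton, Prod.mk.injEq]
    omega
  have e2 := Finset.card_union_add_card_inter L1 L2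
  have e3 := Finset.card_union_add_card_inter (L1 ∪ L2) L3
  have e4 := Finset.card_union_add_card_inter ((L1 ∪ L2) ∪ L3) L4
  have e5 := Finset.card_union_add_card_inter (((L1 ∪ L2) ∪ L3) ∪ L4) L5
  have e6 := Finset.card_union_add_card_inter ((((L1 ∪ L2) ∪ L3) ∪ L4) ∪ L5) L6
  have e7 := Finset.card_union_add_card_inter (((((L1 ∪ L2) ∪ L3) ∪ L4) ∪ L5) ∪ L6) L7
  have e8 := Finset.card_union_add_card_inter ((((((L1 ∪ L2) ∪ L3) ∪ L4) ∪ L5) ∪ L6) ∪ L7) L8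
  rw [i2] at e2; rw [i3] at e3; rw [i4] at e4; rw [i5] at e5
  rw [i6] at e6; rw [i7] at e7; rw [i8] at e8
  simp only [Finset.card_singleton] at e2 e3 e4 e5 e6 e7 e8
  rw [← hU] at e8
  have hUsub : U ⊆ Dm N := by
    rw [hU]
    repeat' apply Finset.union_subset
    all_goals apply Finset.filter_subset
  have hT : ((Icc (-((N:ℕ):ℤ)) ((N:ℕ):ℤ)) ×ˢ (Icc (-((N:ℕ):ℤ)) ((N:ℕ):ℤ))).filter
      (Pc (6*m+3)) = Dm N \ U := by
    ext ⟨x, y⟩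
    simp only [hU, hL1, hL2, hL3, hL4, hL5, hL6, hL7, hL8, Pc, Dm, mem_filter, mem_sdiff,
      mem_union, mem_product, mem_Icc, Prod.mk.injEq]
    omega
  rw [hT]
  have hsplit := Finset.card_sdiff_add_card_eq_card hUsub
  have hD : (Dm N).card = 72*(m*m)+60*m+13 := by rw [Dcard, hN]; ring
  rw [show (72*m^2+8*m) = 72*(m*m)+8*m from by ring]
  set s := m*m with hs
  omega

theorem a3_formula_mod18_9 (t : ℕ) (ht : 0 < t) (h : t % 18 = 9) :
    (a3 t : ℚ) = (2 * (t : ℚ) ^ 2 - 32 * (t : ℚ) + 126) / 9 := by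
  obtain ⟨m, rfl⟩ : ∃ m : ℕ, t = 18*m+9 := ⟨(t-9)/18, by omega⟩
  have hct : 3*(6*m+3) = 18*m+9 := by ring
  set T := (((Icc (-(((6*m+2:ℕ)):ℤ)) ((6*m+2:ℕ):ℤ)) ×ˢ (Icc (-((6*m+2:ℕ):ℤ)) ((6*m+2:ℕ):ℤ))).filter
      (Pc (6*m+3))) with hTdef
  have hset : {M : Matrix (Fin 3) (Fin 3) ℕ | IsMagicSquare3 (18*m+9) M}
      = ↑(T.image (fun p : ℤ × ℤ => gmat (6*m+3) p.1 p.2)) := by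
    ext M
    simp only [Set.mem_setOf_eq, coe_image, Set.mem_image, mem_coe, hTdef, mem_filter,
      mem_product, mem_Icc]
    constructor
    · intro hM
      rw [← hct] at hM
      obtain ⟨p, hp, rfl⟩ := magic_forward (6*m+3) (by omega) M hM
      have hb := hp.1
      exact ⟨p, ⟨⟨⟨by omega, by omega⟩, by omega, by omega⟩, hp⟩, rfl⟩
    · rintro ⟨p, ⟨_, hp⟩, rfl⟩
      rw [← hct]
      exact magic_back (6*m+3) (by omega) p.1 p.2 hp
  have hinj : Set.InjOn (fun p : ℤ × ℤ => gmat (6*m+3) p.1 p.2) T := by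
    intro p hp q hq hpq
    rw [hTdef, mem_coe, mem_filter] at hp hq
    have hbp := hp.2.1
    have hbq := hq.2.1
    have h00 := congrFun (congrFun hpq 0) 0
    have h02 := congrFun (congrFun hpq 0) 2
    simp only [gmat, Matrix.cons_val', Matrix.cons_val_zero, Matrix.cons_val_one,
      Matrix.head_cons, Matrix.empty_val', Matrix.cons_val_fin_one, Matrix.cons_val_two,
      Matrix.tail_cons, Matrix.head_fin_const, Matrix.of_apply] at h00 h02
    have h1 : p.1 = q.1 := by omega
    have h2 : p.2 = q.2 := by omega
    exact Prod.ext h1 h2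
  have hcard : a3 (18*m+9) = 72*m^2+8*m := by
    rw [a3, hset, Set.ncard_coe_finset, Finset.card_image_of_injOn hinj, hTdef, Tcard]
  rw [hcard]
  push_cast
  field_simp
  ring
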